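/- Let m₀, i, m₁ : ℝ → ℝ → ℝ be continuous (m₁ independent of disease duration) and S₀ : ℝ → ℝ be continuous. Define S(t,a) := S₀(t−a)·exp(−∫₀ᵃ (m₀(t−a+τ,τ) + i(t−a+τ,τ)) dτ) and C⋆(t,a) := ∫₀ᵃ i(t−δ, a−δ)·S(t−δ, a−δ)·exp(−∫₀^δ m₁(t−δ+τ, a−δ+τ) dτ) dδ. Then C⋆(t,0) = 0 for all t, and for every t ∈ ℝ and a > 0 the function s ↦ C⋆(t+s, a+s) has derivative −m₁(t,a)·C⋆(t,a) + i(t,a)·S(t,a) at s = 0. (That is, when the mortality of the diseased is independent of duration, C⋆ solves the Cauchy problem (∂ₜ+∂ₐ)γ = −m₁·γ + i·S with γ(t−a,0) = 0.) -/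

import Mathlib

/-- When the mortality `m₁` of the diseased is independent of disease duration,
`C⋆(t,a) = ∫₀ᵃ i(t−δ,a−δ)·S(t−δ,a−δ)·exp(−∫₀^δ m₁(t−δ+τ,a−δ+τ) dτ) dδ`
solves the Cauchy problem `(∂ₜ+∂ₐ)γ = −m₁·γ + i·S` with `γ(t−a,0) = 0`. -/
theorem keiding_Cstar_solves_pde_duration_independent
    (m₀ i m₁ : ℝ → ℝ → ℝ)
    (hm₀ : Continuous fun q : ℝ × ℝ => m₀ q.1 q.2)
    (hi : Continuous fun q : ℝ × ℝ => i q.1 q.2)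
    (hm₁ : Continuous fun q : ℝ × ℝ => m₁ q.1 q.2)
    (S₀ : ℝ → ℝ) (hS₀ : Continuous S₀)
    (S : ℝ → ℝ → ℝ)
    (hS : ∀ t a : ℝ, S t a = S₀ (t - a) *
      Real.exp (-∫ τ in (0:ℝ)..a, (m₀ (t - a + τ) τ + i (t - a + τ) τ)))
    (Cstar : ℝ → ℝ → ℝ)
    (hCstar : ∀ t a : ℝ, Cstar t a =
      ∫ δ in (0:ℝ)..a, i (t - δ) (a - δ) * S (t - δ) (a - δ) *
        Real.exp (-∫ τ in (0:ℝ)..δ, m₁ (t - δ + τ) (a - δ + τ))) :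
    (∀ t : ℝ, Cstar t 0 = 0) ∧
    (∀ t a : ℝ, 0 < a →
      HasDerivAt (fun s : ℝ => Cstar (t + s) (a + s))
        (-m₁ t a * Cstar t a + i t a * S t a) 0) := by
  constructor
  · intro t
    rw [hCstar, intervalIntegral.integral_same]
  intro t a _
  -- `M r` is the mortality of the diseased along the characteristic.
  set M : ℝ → ℝ := fun r => m₁ (t + r) (a + r) with hM
  have hMc : Continuous M :=
    hm₁.comp ((continuous_const.add continuous_id).prodMk (continuous_const.add continuous_id))
  have hMint : ∀ c d : ℝ, IntervalIntegrable M MeasureTheory.volume c d :=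
    fun c d => hMc.intervalIntegrable c d
  -- `ψ` is the joint hazard for the susceptibles along the characteristic.
  set ψ : ℝ → ℝ := fun τ => m₀ (t - a + τ) τ + i (t - a + τ) τ with hψ
  have hψc : Continuous ψ := by
    apply Continuous.add
    · exact hm₀.comp ((continuous_const.add continuous_id).prodMk continuous_id)
    · exact hi.comp ((continuous_const.add continuous_id).prodMk continuous_id)
  -- `S` along the characteristic
  have hSchar : ∀ σ : ℝ, S (t - σ) (a - σ)
      = S₀ (t - a) * Real.exp (-∫ τ in (0:ℝ)..(a - σ), ψ τ) := by
    intro σ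
    rw [hS]
    have h1 : t - σ - (a - σ) = t - a := by ring
    rw [h1]
  have hScont : Continuous fun σ : ℝ => S (t - σ) (a - σ) := by
    simp only [hSchar]
    apply continuous_const.mul
    apply Real.continuous_exp.comp
    apply Continuous.neg
    exact (intervalIntegral.continuous_primitive (fun c d => hψc.intervalIntegrable c d) 0).comp
      (continuous_const.sub continuous_id)
  -- the integrand after the change of variables
  set H : ℝ → ℝ := fun σ => i (t - σ) (a - σ) * S (t - σ) (a - σ) *
      Real.exp (-∫ r in (-σ)..(0:ℝ), M r) with hH
  have hHc : Continuous H := by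
    apply Continuous.mul
    · exact (hi.comp ((continuous_const.sub continuous_id).prodMk
        (continuous_const.sub continuous_id))).mul hScont
    have : Continuous fun σ : ℝ => ∫ r in (0:ℝ)..(-σ), M r :=
      (intervalIntegral.continuous_primitive hMint 0).comp continuous_neg
    have h2 : (fun σ : ℝ => ∫ r in (-σ)..(0:ℝ), M r)
        = fun σ : ℝ => -∫ r in (0:ℝ)..(-σ), M r := by
      funext σ; rw [intervalIntegral.integral_symm]
    have h3 : Continuous fun σ : ℝ => ∫ r in (-σ)..(0:ℝ), M r := h2 ▸ this.neg
    exact Real.continuous_exp.comp h3.neg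
  -- inner substitution lemma
  have hinner : ∀ σ s : ℝ, (∫ τ in (0:ℝ)..(σ + s), m₁ (t - σ + τ) (a - σ + τ))
      = ∫ r in (-σ)..s, M r := by
    intro σ s
    have h1 : ∀ τ : ℝ, m₁ (t - σ + τ) (a - σ + τ) = M (τ - σ) := by
      intro τ; simp only [hM]; ring_nf
    calc (∫ τ in (0:ℝ)..(σ + s), m₁ (t - σ + τ) (a - σ + τ))
        = ∫ τ in (0:ℝ)..(σ + s), M (τ - σ) := by simp only [h1]
      _ = ∫ r in (0 - σ)..(σ + s - σ), M r := intervalIntegral.integral_comp_sub_right M σ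
      _ = ∫ r in (-σ)..s, M r := by norm_num
  -- the key identity: `Cstar` along the characteristic
  have hkey : ∀ s : ℝ, Cstar (t + s) (a + s)
      = Real.exp (-∫ r in (0:ℝ)..s, M r) * ∫ σ in (-s)..a, H σ := by
    intro s
    rw [hCstar]
    have hsub : (∫ δ in (0:ℝ)..(a + s), i (t + s - δ) (a + s - δ) * S (t + s - δ) (a + s - δ) *
          Real.exp (-∫ τ in (0:ℝ)..δ, m₁ (t + s - δ + τ) (a + s - δ + τ)))
        = ∫ σ in (-s)..a, i (t + s - (σ + s)) (a + s - (σ + s)) *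
            S (t + s - (σ + s)) (a + s - (σ + s)) *
            Real.exp (-∫ τ in (0:ℝ)..(σ + s), m₁ (t + s - (σ + s) + τ) (a + s - (σ + s) + τ)) := by
      rw [intervalIntegral.integral_comp_add_right
        (fun δ => i (t + s - δ) (a + s - δ) * S (t + s - δ) (a + s - δ) *
          Real.exp (-∫ τ in (0:ℝ)..δ, m₁ (t + s - δ + τ) (a + s - δ + τ))) s]
      norm_num
    rw [hsub]
    have hpt : ∀ σ : ℝ, i (t + s - (σ + s)) (a + s - (σ + s)) *
        S (t + s - (σ + s)) (a + s - (σ + s)) *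
        Real.exp (-∫ τ in (0:ℝ)..(σ + s), m₁ (t + s - (σ + s) + τ) (a + s - (σ + s) + τ))
        = Real.exp (-∫ r in (0:ℝ)..s, M r) * H σ := by
      intro σ
      have e1 : t + s - (σ + s) = t - σ := by ring
      have e2 : a + s - (σ + s) = a - σ := by ring
      rw [e1, e2, hinner σ s]
      have hsplit : (∫ r in (-σ)..s, M r)
          = (∫ r in (-σ)..(0:ℝ), M r) + ∫ r in (0:ℝ)..s, M r :=
        (intervalIntegral.integral_add_adjacent_intervals (hMint _ _) (hMint _ _)).symm
      rw [hsplit, neg_add, Real.exp_add, hH]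
      ring
    calc (∫ σ in (-s)..a, i (t + s - (σ + s)) (a + s - (σ + s)) *
            S (t + s - (σ + s)) (a + s - (σ + s)) *
            Real.exp (-∫ τ in (0:ℝ)..(σ + s), m₁ (t + s - (σ + s) + τ) (a + s - (σ + s) + τ)))
        = ∫ σ in (-s)..a, Real.exp (-∫ r in (0:ℝ)..s, M r) * H σ := by
          simp only [hpt]
      _ = Real.exp (-∫ r in (0:ℝ)..s, M r) * ∫ σ in (-s)..a, H σ :=
          intervalIntegral.integral_const_mul _ _
  -- derivative of the exponential factor
  have hE : HasDerivAt (fun s : ℝ => Real.exp (-∫ r in (0:ℝ)..s, M r)) (-M 0) 0 := by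
    have h1 : HasDerivAt (fun s : ℝ => ∫ r in (0:ℝ)..s, M r) (M 0) 0 :=
      intervalIntegral.integral_hasDerivAt_right (hMint 0 0)
        (hMc.stronglyMeasurableAtFilter _ _) hMc.continuousAt
    have h2 := (h1.neg).exp
    simpa using h2
  -- derivative of the integral factor
  have hG : HasDerivAt (fun s : ℝ => ∫ σ in (-s)..a, H σ) (H 0) 0 := by
    have h1 : HasDerivAt (fun u : ℝ => ∫ σ in a..u, H σ) (H 0) (-(0:ℝ)) := by
      rw [neg_zero]
      exact intervalIntegral.integral_hasDerivAt_right (hHc.intervalIntegrable _ _)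
        (hHc.stronglyMeasurableAtFilter _ _) hHc.continuousAt
    have h2 : HasDerivAt (fun s : ℝ => ∫ σ in a..(-s), H σ) (-H 0) 0 := by
      have := h1.comp 0 (hasDerivAt_neg (0:ℝ))
      simpa [Function.comp_def] using this
    have h3 : HasDerivAt (fun s : ℝ => -∫ σ in a..(-s), H σ) (- -H 0) 0 := h2.neg
    have h4 : (fun s : ℝ => -∫ σ in a..(-s), H σ) = fun s : ℝ => ∫ σ in (-s)..a, H σ := by
      funext s; rw [intervalIntegral.integral_symm a (-s)]
    rw [h4] at h3
    simpa using h3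
  -- assemble
  have hF : HasDerivAt (fun s : ℝ => Real.exp (-∫ r in (0:ℝ)..s, M r) * ∫ σ in (-s)..a, H σ)
      ((-M 0) * (∫ σ in (-(0:ℝ))..a, H σ) + Real.exp (-∫ r in (0:ℝ)..(0:ℝ), M r) * H 0) 0 :=
    hE.mul hG
  have hfun : (fun s : ℝ => Cstar (t + s) (a + s))
      = fun s : ℝ => Real.exp (-∫ r in (0:ℝ)..s, M r) * ∫ σ in (-s)..a, H σ := by
    funext s; exact hkey s
  rw [hfun]
  have hC0 : Cstar t a = ∫ σ in (-(0:ℝ))..a, H σ := by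
    have := hkey 0
    simpa using this
  have hH0 : H 0 = i t a * S t a := by
    simp [hH]
  have hM0 : M 0 = m₁ t a := by simp [hM]
  have : (-M 0) * (∫ σ in (-(0:ℝ))..a, H σ) + Real.exp (-∫ r in (0:ℝ)..(0:ℝ), M r) * H 0
      = -m₁ t a * Cstar t a + i t a * S t a := by
    rw [← hC0, hH0, hM0]
    simp
  rw [← this]
  exact hF
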